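/- For a semi-ideal ultraparallel trapezoid with ideal upper vertices A₁, A₂ decorated with horocycles, signed upper edge length l₁₂, lateral edge lengths r₁, r₂ (signed distances from B₁, B₂ to the horocycles at A₁, A₂), and lower edge length a₁₂, one has cosh(a₁₂) = 1 + 2e^{l₁₂ − r₁ − r₂}. -/
import Mathlib


/-- The Minkowski bilinear form on `ℝ^{1,2}`. -/
def mink (x y : Fin 3 → ℝ) : ℝ := -(x 0 * y 0) + x 1 * y 1 + x 2 * y 2

lemma mink_smul_smul (c d : ℝ) (x y : Fin 3 → ℝ) :
    mink (c • x) (d • y) = c * d * mink x y := by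
  simp [mink, Pi.smul_apply]; ring

lemma mink_smul_right (c : ℝ) (x y : Fin 3 → ℝ) :
    mink x (c • y) = c * mink x y := by
  simp [mink, Pi.smul_apply]; ring

lemma mink_add_add (x y z w : Fin 3 → ℝ) :
    mink (x + y) (z + w) = mink x z + mink x w + mink y z + mink y w := by
  simp [mink, Pi.add_apply]; ring

lemma mink_add_right (x y z : Fin 3 → ℝ) :
    mink x (y + z) = mink x y + mink x z := by
  simp [mink, Pi.add_apply]; ring

lemma mink_comm (x y : Fin 3 → ℝ) : mink x y = mink y x := by
  simp [mink]; ring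

/-- For a semi-ideal ultraparallel trapezoid with decorated ideal upper vertices: the ideal
vertices are given by future light-like polar vectors `l₁, l₂` of the decorating horocycles,
`B₁, B₂` on the lower line (with unit normal `m`) are their orthogonal projections
(`lᵢ` a positive multiple of `Bᵢ + m`), the signed upper edge length satisfies
`⟨l₁, l₂⟩ = -2 e^{l₁₂}`, the signed lateral edge lengths satisfy `⟨Bᵢ, lᵢ⟩ = -e^{rᵢ}`, and
`a₁₂ ≥ 0` is the lower edge length (`cosh a₁₂ = -⟨B₁, B₂⟩`).  Then
`cosh a₁₂ = 1 + 2 e^{l₁₂ - r₁ - r₂}`. -/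
theorem semi_ideal_trapezoid_lower_edge
    (m B₁ B₂ l₁ l₂ : Fin 3 → ℝ) (l₁₂ r₁ r₂ a₁₂ : ℝ)
    (hm : mink m m = 1)
    (hB₁ : mink B₁ B₁ = -1) (hB₁0 : 0 < B₁ 0) (hB₁m : mink B₁ m = 0)
    (hB₂ : mink B₂ B₂ = -1) (hB₂0 : 0 < B₂ 0) (hB₂m : mink B₂ m = 0)
    (hl₁ : mink l₁ l₁ = 0) (hl₁0 : 0 < l₁ 0)
    (hl₂ : mink l₂ l₂ = 0) (hl₂0 : 0 < l₂ 0)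
    (hind : ¬ ∃ t : ℝ, l₂ = t • l₁)
    (hproj₁ : ∃ c : ℝ, 0 < c ∧ l₁ = c • (B₁ + m))
    (hproj₂ : ∃ c : ℝ, 0 < c ∧ l₂ = c • (B₂ + m))
    (hl₁₂ : mink l₁ l₂ = -2 * Real.exp l₁₂)
    (hr₁ : mink B₁ l₁ = -Real.exp r₁)
    (hr₂ : mink B₂ l₂ = -Real.exp r₂)
    (ha : 0 ≤ a₁₂) (halen : Real.cosh a₁₂ = -(mink B₁ B₂)) :
    Real.cosh a₁₂ = 1 + 2 * Real.exp (l₁₂ - r₁ - r₂) := by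
  obtain ⟨c₁, hc₁, h1⟩ := hproj₁
  obtain ⟨c₂, hc₂, h2⟩ := hproj₂
  subst h1 h2
  rw [mink_smul_right, mink_add_right, hB₁, hB₁m] at hr₁
  rw [mink_smul_right, mink_add_right, hB₂, hB₂m] at hr₂
  have hc1e : c₁ = Real.exp r₁ := by linarith
  have hc2e : c₂ = Real.exp r₂ := by linarith
  rw [mink_smul_smul, mink_add_add, hB₁m, hm, mink_comm m B₂, hB₂m, hc1e, hc2e] at hl₁₂
  have hE : Real.exp l₁₂ = Real.exp (l₁₂ - r₁ - r₂) * Real.exp r₁ * Real.exp r₂ := by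
    rw [← Real.exp_add, ← Real.exp_add]; ring_nf
  have h12 : -(mink B₁ B₂) = 1 + 2 * Real.exp (l₁₂ - r₁ - r₂) := by
    have e1 := Real.exp_pos r₁
    have e2 := Real.exp_pos r₂
    nlinarith [hl₁₂, hE, mul_pos e1 e2]
  rw [halen, h12]
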